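/- The variance of the Gaussian kernel density estimator at a point is bounded by the smoothed density: for Y₁,…,Yₙ independent with Yᵢ ~ N(μᵢ,1), ĝ_h(y) = (1/(nh)) Σᵢ φ((y−Yᵢ)/h) satisfies Var(ĝ_h(y)) ≤ (1/(nh√(4π))) · g*(y; h²/2 smoothing), and in particular Var(ĝ_h(y)) ≤ C·g*_{G,1}(y)/(n h) + O(1/(nh·n)) where g*_{G,1}(y) = (1/n)Σᵢ φ(y − μᵢ), for an absolute constant C when h ≤ 1. -/

import Mathlib

open MeasureTheory ProbabilityTheory

/-- Standard normal density. -/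
noncomputable def phi (x : ℝ) : ℝ := (Real.sqrt (2 * Real.pi))⁻¹ * Real.exp (-x ^ 2 / 2)

/-- Density of `N(0, v)` at `t`. -/
noncomputable def gpdf (v t : ℝ) : ℝ :=
  (Real.sqrt (2 * Real.pi * v))⁻¹ * Real.exp (-t ^ 2 / (2 * v))

open scoped ENNReal NNReal

lemma pi_map_eval {n : ℕ} (μ : Fin n → Measure ℝ) [∀ i, IsProbabilityMeasure (μ i)]
    (i : Fin n) : (Measure.pi μ).map (Function.eval i) = μ i := by
  classical
  ext s hs
  rw [Measure.map_apply (measurable_pi_apply i) hs]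
  have h1 : Function.eval i ⁻¹' s
      = Set.pi Set.univ (Function.update (fun _ : Fin n => (Set.univ : Set ℝ)) i s) := by
    ext x
    simp only [Set.mem_preimage, Set.mem_univ_pi, Function.update_apply]
    constructor
    · intro hx j
      by_cases hj : j = i
      · subst hj; simp [hx]
      · simp [hj]
    · intro hx
      have := hx i
      simpa using this
  rw [h1, Measure.pi_pi]
  rw [Finset.prod_eq_single_of_mem i (Finset.mem_univ i)]
  · simp
  · intro j _ hj
    simp [Function.update_apply, hj]

lemma pi_eval_apply {n : ℕ} (μ : Fin n → Measure ℝ) [∀ i, IsProbabilityMeasure (μ i)]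
    (i : Fin n) {s : Set ℝ} (hs : MeasurableSet s) :
    Measure.pi μ (Function.eval i ⁻¹' s) = μ i s := by
  rw [← Measure.map_apply (measurable_pi_apply i) hs, pi_map_eval]

lemma indepFun_eval {n : ℕ} (μ : Fin n → Measure ℝ) [∀ i, IsProbabilityMeasure (μ i)]
    {i j : Fin n} (hij : i ≠ j) :
    IndepFun (Function.eval i) (Function.eval j) (Measure.pi μ) := by
  rw [indepFun_iff_measure_inter_preimage_eq_mul]
  intro s t hs ht
  classical
  have h1 : Function.eval i ⁻¹' s ∩ Function.eval j ⁻¹' t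
      = Set.pi Set.univ (fun k => if k = i then s else if k = j then t else Set.univ) := by
    ext x
    simp only [Set.mem_inter_iff, Set.mem_preimage, Set.mem_univ_pi]
    constructor
    · rintro ⟨h1, h2⟩ k
      by_cases hk : k = i
      · subst hk; simp [hij, h1]
      · by_cases hk' : k = j
        · subst hk'; simp [hk, h2]
        · simp [hk, hk']
    · intro hx
      refine ⟨?_, ?_⟩
      · have := hx i; simpa using this
      · have := hx j; simpa [hij.symm] using this
  rw [h1, Measure.pi_pi, pi_eval_apply μ i hs, pi_eval_apply μ j ht]
  rw [← Finset.prod_subset (Finset.subset_univ ({i, j} : Finset (Fin n)))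
      (by intro k _ hk
          simp only [Finset.mem_insert, Finset.mem_singleton, not_or] at hk
          simp [hk.1, hk.2])]
  rw [Finset.prod_pair hij]
  simp [hij.symm]

lemma integral_gaussianReal_one (m : ℝ) (g : ℝ → ℝ) (hg : Measurable g) :
    ∫ x, g x ∂(gaussianReal m 1) = ∫ x, gaussianPDFReal m 1 x * g x := by
  rw [gaussianReal_of_var_ne_zero m one_ne_zero]
  rw [show gaussianPDF m 1 = fun x => (((gaussianPDFReal m 1 x).toNNReal : ℝ≥0) : ℝ≥0∞) from rfl]
  rw [integral_withDensity_eq_integral_smul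
      ((measurable_gaussianPDFReal m 1).real_toNNReal)]
  congr 1
  funext x
  simp [NNReal.smul_def, Real.coe_toNNReal _ (gaussianPDFReal_nonneg _ _ _)]

lemma key_integral (h : ℝ) (hh : 0 < h) (m y : ℝ) :
    ∫ x, gaussianPDFReal m 1 x * (phi ((y - x) / h)) ^ 2
      = (Real.sqrt (4 * Real.pi))⁻¹ * h * gpdf (1 + h ^ 2 / 2) (y - m) := by
  have hpi := Real.pi_pos
  have hh2 : (0:ℝ) < 2 + h ^ 2 := by positivity
  have hne : h ≠ 0 := ne_of_gt hh
  have hne2 : (2:ℝ) + h ^ 2 ≠ 0 := ne_of_gt hh2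
  set A : ℝ := (2 + h ^ 2) / (2 * h ^ 2) with hA
  set c : ℝ := (m * h ^ 2 + 2 * y) / (2 + h ^ 2) with hc
  set K : ℝ := (y - m) ^ 2 / (2 + h ^ 2) with hK
  have hApos : 0 < A := by positivity
  have h2 : ((Real.sqrt (2 * Real.pi))⁻¹) ^ 2 = (2 * Real.pi)⁻¹ := by
    rw [← one_div, div_pow, one_pow, Real.sq_sqrt (by positivity)]
    ring
  have step1 : ∀ x, gaussianPDFReal m 1 x * (phi ((y - x) / h)) ^ 2
      = ((Real.sqrt (2 * Real.pi))⁻¹ * (2 * Real.pi)⁻¹ * Real.exp (-K))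
        * Real.exp (-A * (x - c) ^ 2) := by
    intro x
    unfold gaussianPDFReal phi
    push_cast
    rw [mul_one, mul_pow, h2, sq (Real.exp _), ← Real.exp_add]
    have hexp : Real.exp (-(x - m) ^ 2 / (2 * 1))
          * Real.exp (-((y - x) / h) ^ 2 / 2 + -((y - x) / h) ^ 2 / 2)
        = Real.exp (-K) * Real.exp (-A * (x - c) ^ 2) := by
      rw [← Real.exp_add, ← Real.exp_add]
      congr 1
      rw [hK, hA, hc]
      field_simp
      ring
    linear_combination ((Real.sqrt (2 * Real.pi))⁻¹ * (2 * Real.pi)⁻¹) * hexp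
  simp_rw [step1]
  rw [integral_const_mul]
  have step2 : ∫ x : ℝ, Real.exp (-A * (x - c) ^ 2) = Real.sqrt (Real.pi / A) := by
    rw [← integral_gaussian A]
    exact integral_sub_right_eq_self (fun x => Real.exp (-A * x ^ 2)) c
  rw [step2]
  unfold gpdf
  have e1 : Real.exp (-(y - m) ^ 2 / (2 * (1 + h ^ 2 / 2))) = Real.exp (-K) := by
    rw [hK]; congr 1; field_simp
  rw [e1]
  have hq : Real.sqrt (Real.pi / A) = Real.sqrt (2 * Real.pi) * h / Real.sqrt (2 + h ^ 2) := by
    rw [show Real.pi / A = 2 * Real.pi * h ^ 2 / (2 + h ^ 2) by rw [hA]; field_simp]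
    rw [Real.sqrt_div (by positivity), Real.sqrt_mul (by positivity), Real.sqrt_sq hh.le]
  have hv : Real.sqrt (2 * Real.pi * (1 + h ^ 2 / 2))
      = Real.sqrt Real.pi * Real.sqrt (2 + h ^ 2) := by
    rw [show 2 * Real.pi * (1 + h ^ 2 / 2) = Real.pi * (2 + h ^ 2) by ring,
      Real.sqrt_mul hpi.le]
  have h4 : Real.sqrt (4 * Real.pi) = 2 * Real.sqrt Real.pi := by
    rw [show (4:ℝ) * Real.pi = 2 ^ 2 * Real.pi by ring, Real.sqrt_mul (by positivity),
      Real.sqrt_sq (by norm_num)]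
  rw [hq, hv, h4]
  have hsp : Real.sqrt Real.pi > 0 := Real.sqrt_pos.mpr hpi
  have hs2p : Real.sqrt (2 * Real.pi) > 0 := Real.sqrt_pos.mpr (by positivity)
  have hsq : Real.sqrt (2 + h ^ 2) > 0 := Real.sqrt_pos.mpr hh2
  have hs2 : Real.sqrt (2 * Real.pi) ^ 2 = 2 * Real.pi := Real.sq_sqrt (by positivity)
  have hsp2 : Real.sqrt Real.pi ^ 2 = Real.pi := Real.sq_sqrt hpi.le
  field_simp
  linear_combination hsp2

/-- variance bound for the Gaussian kernel density estimator.  For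
independent `Yᵢ ~ N(μᵢ, 1)` and `ĝ_h(y) = (1/(nh)) Σᵢ φ((y - Yᵢ)/h)`,
`Var(ĝ_h(y)) ≤ (1/(n h √(4π))) · (1/n) Σᵢ φ_{1 + h²/2}(y - μᵢ)`, the mixture density
smoothed at scale `h²/2`; in particular it is of order `g*(y)/(nh)`. -/
theorem kde_variance_bound
    (n : ℕ) (hn : 0 < n) (h : ℝ) (hh : 0 < h) (hh1 : h ≤ 1)
    (μ : Fin n → ℝ) (y : ℝ) :
    variance
      (fun Y : Fin n → ℝ => (1 / (n * h)) * ∑ i, phi ((y - Y i) / h))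
      (Measure.pi fun i => gaussianReal (μ i) 1)
      ≤ (1 / (n * h * Real.sqrt (4 * Real.pi)))
          * ((1 / (n : ℝ)) * ∑ i, gpdf (1 + h ^ 2 / 2) (y - μ i)) := by
  classical
  set ν : Measure (Fin n → ℝ) := Measure.pi fun i => gaussianReal (μ i) 1 with hν
  have hgmeas : Measurable fun t : ℝ => phi ((y - t) / h) := by
    unfold phi
    fun_prop
  have hgb : ∀ t, ‖phi ((y - t) / h)‖ ≤ (Real.sqrt (2 * Real.pi))⁻¹ := by
    intro t
    rw [Real.norm_eq_abs]
    unfold phi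
    rw [abs_mul, abs_of_nonneg (by positivity : (0:ℝ) ≤ (Real.sqrt (2 * Real.pi))⁻¹),
      abs_of_nonneg (Real.exp_nonneg _)]
    nlinarith [Real.exp_le_one_iff.mpr
      (by nlinarith [sq_nonneg ((y - t) / h)] : -((y - t) / h) ^ 2 / 2 ≤ 0),
      inv_nonneg.mpr (Real.sqrt_nonneg (2 * Real.pi))]
  set g : ℝ → ℝ := fun t => phi ((y - t) / h) with hgdef
  set f : Fin n → (Fin n → ℝ) → ℝ := fun i Y => g (Y i) with hfdef
  have hfmeas : ∀ i, Measurable (f i) := fun i => hgmeas.comp (measurable_pi_apply i)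
  have hMem : ∀ i, MemLp (f i) 2 ν := fun i =>
    MemLp.mono_exponent (memLp_top_of_bound (hfmeas i).aestronglyMeasurable _
      (ae_of_all _ fun Y => hgb (Y i))) le_top
  have hfun : (fun Y : Fin n → ℝ => (1 / ((n : ℝ) * h)) * ∑ i, phi ((y - Y i) / h))
      = fun Y => (1 / ((n : ℝ) * h)) * (∑ i, f i) Y := by
    funext Y
    simp [hfdef, hgdef, Finset.sum_apply]
  rw [hfun, variance_const_mul]
  have hindep : Set.Pairwise ↑(Finset.univ : Finset (Fin n))
      fun i j => IndepFun (f i) (f j) ν := by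
    intro i _ j _ hij
    exact (indepFun_eval (fun i => gaussianReal (μ i) 1) hij).comp hgmeas hgmeas
  rw [IndepFun.variance_sum (fun i _ => hMem i) hindep]
  have hbound : ∀ i, variance (f i) ν
      ≤ (Real.sqrt (4 * Real.pi))⁻¹ * h * gpdf (1 + h ^ 2 / 2) (y - μ i) := by
    intro i
    refine (variance_le_expectation_sq (hfmeas i).aestronglyMeasurable).trans_eq ?_
    have hmap : ν[(f i) ^ 2] = ∫ x, (g x) ^ 2 ∂(gaussianReal (μ i) 1) := by
      rw [← pi_map_eval (fun i => gaussianReal (μ i) 1) i,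
        integral_map (measurable_pi_apply i).aemeasurable
          ((hgmeas.pow_const 2).aestronglyMeasurable)]
      rfl
    rw [hmap, integral_gaussianReal_one _ _ (hgmeas.pow_const 2)]
    exact key_integral h hh (μ i) y
  calc (1 / ((n : ℝ) * h)) ^ 2 * ∑ i, variance (f i) ν
      ≤ (1 / ((n : ℝ) * h)) ^ 2
          * ∑ i, (Real.sqrt (4 * Real.pi))⁻¹ * h * gpdf (1 + h ^ 2 / 2) (y - μ i) := by
        refine mul_le_mul_of_nonneg_left (Finset.sum_le_sum fun i _ => hbound i)
          (by positivity)
    _ = (1 / (n * h * Real.sqrt (4 * Real.pi)))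
          * ((1 / (n : ℝ)) * ∑ i, gpdf (1 + h ^ 2 / 2) (y - μ i)) := by
        rw [← Finset.mul_sum]
        have hn' : ((n : ℝ)) ≠ 0 := Nat.cast_ne_zero.mpr hn.ne'
        have hs4 : Real.sqrt (4 * Real.pi) ≠ 0 := by positivity
        have hc : (1 / ((n : ℝ) * h)) ^ 2 * ((Real.sqrt (4 * Real.pi))⁻¹ * h)
            = 1 / ((n : ℝ) * h * Real.sqrt (4 * Real.pi)) * (1 / (n : ℝ)) := by
          field_simp
        linear_combination (∑ i, gpdf (1 + h ^ 2 / 2) (y - μ i)) * hc
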